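/- Let q ≥ 2 and d = e1 + e2 be integers with 2 ≤ e2 ≤ e1 ≤ d − 2, and let B be the set of odd prime divisors of gcd(e1, e2). Then ∑_{b ∈ B} b·q^{e1·e2/b} < 3.01·q^{e1·e2/3}. -/

import Mathlib

-- sum of naturals each ≥ 2 is at most their product
lemma sum_le_prod_of_two_le (s : Finset ℕ) (h : ∀ i ∈ s, 2 ≤ i) :
    ∑ i ∈ s, i ≤ ∏ i ∈ s, i := by
  induction s using Finset.cons_induction with
  | empty => simp
  | cons a s ha ih =>
    rw [Finset.sum_cons, Finset.prod_cons]
    have ha2 : 2 ≤ a := h a (Finset.mem_cons_self _ _)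
    have hs : ∑ i ∈ s, i ≤ ∏ i ∈ s, i := ih fun i hi => h i (Finset.mem_cons_of_mem hi)
    rcases s.eq_empty_or_nonempty with rfl | ⟨x, hx⟩
    · simp
    · have hp2 : 2 ≤ ∏ i ∈ s, i := le_trans (h x (Finset.mem_cons_of_mem hx))
        (Finset.single_le_prod' (fun i hi => Nat.one_le_of_lt (h i (Finset.mem_cons_of_mem hi))) hx)
      nlinarith

lemma sq_lt_two_pow (n : ℕ) (hn : 5 ≤ n) : n ^ 2 < 2 ^ n := by
  induction n with
  | zero => omega
  | succ n ih =>
    rcases Nat.lt_or_ge n 5 with h | h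
    · interval_cases n <;> revert hn <;> decide
    · have ihh := ih h
      have h1 : 2 * n + 1 ≤ n ^ 2 := by nlinarith
      have : (n + 1) ^ 2 = n ^ 2 + (2 * n + 1) := by ring
      have h2 : 2 ^ (n + 1) = 2 ^ n + 2 ^ n := by ring
      omega

-- key inequality for the case 3 ∉ B
lemma keyA (n : ℕ) (hn : 5 ≤ n) : (n : ℝ) < 3.01 * (2 : ℝ) ^ ((2 * (n : ℝ) ^ 2) / 15) := by
  have h1 : (2 : ℝ) ^ ((2 * (n : ℝ)) / 3) ≤ (2 : ℝ) ^ ((2 * (n : ℝ) ^ 2) / 15) := by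
    apply Real.rpow_le_rpow_of_exponent_le one_le_two
    have : (5 : ℝ) ≤ n := by exact_mod_cast hn
    nlinarith
  have hcube : ((n : ℝ)) ^ 3 < ((2 : ℝ) ^ ((2 * (n : ℝ)) / 3)) ^ 3 := by
    have : ((2 : ℝ) ^ ((2 * (n : ℝ)) / 3)) ^ 3 = (2 : ℝ) ^ (2 * n : ℕ) := by
      rw [← Real.rpow_natCast ((2:ℝ) ^ ((2 * (n:ℝ))/3)) 3, ← Real.rpow_mul (by norm_num)]
      rw [← Real.rpow_natCast 2 (2 * n)]
      push_cast
      ring_nf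
    rw [this]
    have h2 : (n : ℕ) ^ 2 < 2 ^ n := sq_lt_two_pow n hn
    have h3 : (n : ℕ) < 2 ^ n := (Nat.lt_two_pow_self (n := n))
    have h2R : (n : ℝ) ^ 2 < (2 : ℝ) ^ (n : ℕ) := by exact_mod_cast h2
    have h3R : (n : ℝ) < (2 : ℝ) ^ (n : ℕ) := by exact_mod_cast h3
    have hn0 : (0 : ℝ) ≤ (n : ℝ) := Nat.cast_nonneg n
    calc (n : ℝ) ^ 3 = (n : ℝ) * (n : ℝ) ^ 2 := by ring
    _ < (2:ℝ) ^ (n:ℕ) * (2:ℝ) ^ (n:ℕ) := by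
        apply mul_lt_mul' h3R.le h2R (by positivity) (by positivity)
    _ = (2 : ℝ) ^ (2 * n : ℕ) := by rw [two_mul, pow_add]
  have hlt : (n : ℝ) < (2 : ℝ) ^ ((2 * (n : ℝ)) / 3) := by
    have h0 : (0:ℝ) ≤ (n:ℝ) := Nat.cast_nonneg n
    have h0' : (0:ℝ) ≤ (2 : ℝ) ^ ((2 * (n : ℝ)) / 3) := (Real.rpow_pos_of_pos two_pos _).le
    exact (pow_lt_pow_iff_left₀ h0 h0' (by norm_num)).mp hcube
  calc (n : ℝ) < (2 : ℝ) ^ ((2 * (n : ℝ)) / 3) := hlt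
  _ ≤ (2 : ℝ) ^ ((2 * (n : ℝ) ^ 2) / 15) := h1
  _ ≤ 3.01 * (2 : ℝ) ^ ((2 * (n : ℝ) ^ 2) / 15) := by
      nlinarith [(Real.rpow_pos_of_pos two_pos ((2 * (n : ℝ) ^ 2) / 15))]

-- key inequality for the case 3 ∈ B
lemma keyB (n : ℕ) (hn : 5 ≤ n) : (n : ℝ) < 0.01 * (2 : ℝ) ^ ((6 * (n : ℝ) ^ 2) / 5) := by
  have h1 : (2 : ℝ) ^ ((5 * n : ℕ) : ℝ) ≤ (2 : ℝ) ^ ((6 * (n : ℝ) ^ 2) / 5) := by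
    apply Real.rpow_le_rpow_of_exponent_le one_le_two
    have : (5 : ℝ) ≤ n := by exact_mod_cast hn
    push_cast
    nlinarith
  have h2 : (n : ℝ) < 0.01 * (2 : ℝ) ^ ((5 * n : ℕ) : ℝ) := by
    rw [Real.rpow_natCast]
    have h3 : (n : ℝ) < (2 : ℝ) ^ (n : ℕ) := by exact_mod_cast ((Nat.lt_two_pow_self (n := n)))
    have h4 : (2 : ℝ) ^ (5 * n) = (2:ℝ) ^ (4 * n) * 2 ^ n := by
      rw [← pow_add]; ring_nf
    have h5 : (1048576 : ℝ) ≤ (2:ℝ) ^ (4 * n) := by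
      calc (1048576 : ℝ) = 2 ^ 20 := by norm_num
      _ ≤ (2:ℝ) ^ (4 * n) := by
          apply pow_le_pow_right₀ one_le_two; omega
    have h6 : (0:ℝ) < (2:ℝ) ^ n := by positivity
    rw [h4]
    nlinarith
  calc (n : ℝ) < 0.01 * (2 : ℝ) ^ ((5 * n : ℕ) : ℝ) := h2
  _ ≤ 0.01 * (2 : ℝ) ^ ((6 * (n : ℝ) ^ 2) / 5) := by nlinarith

-- generic bound for the sum over primes ≥ 5
lemma aux_sum_lt (q : ℕ) (hq : 2 ≤ q) (E : ℝ) (hE0 : 0 ≤ E) (S : Finset ℕ)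
    (h5 : ∀ b ∈ S, 5 ≤ b) (c : ℝ)
    (hkey : ((∏ b ∈ S, b : ℕ) : ℝ) < c * (2 : ℝ) ^ (2 * E / 15)) :
    ∑ b ∈ S, (b : ℝ) * (q : ℝ) ^ (E / (b : ℝ)) < c * (q : ℝ) ^ (E / 3) := by
  have hq1 : (1 : ℝ) ≤ q := by exact_mod_cast le_trans one_le_two hq
  have hq2 : (2 : ℝ) ≤ q := by exact_mod_cast hq
  have hq0 : (0 : ℝ) < q := lt_of_lt_of_le one_pos hq1
  have step1 : ∑ b ∈ S, (b : ℝ) * (q : ℝ) ^ (E / (b : ℝ))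
      ≤ ((∑ b ∈ S, b : ℕ) : ℝ) * (q : ℝ) ^ (E / 5) := by
    push_cast
    rw [Finset.sum_mul]
    apply Finset.sum_le_sum
    intro b hb
    have hb5 : (5 : ℝ) ≤ b := by exact_mod_cast h5 b hb
    have : E / (b : ℝ) ≤ E / 5 := by
      apply div_le_div_of_nonneg_left hE0 (by norm_num) hb5
    exact mul_le_mul_of_nonneg_left (Real.rpow_le_rpow_of_exponent_le hq1 this)
      (by positivity)
  have step2 : ((∑ b ∈ S, b : ℕ) : ℝ) ≤ ((∏ b ∈ S, b : ℕ) : ℝ) := by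
    exact_mod_cast sum_le_prod_of_two_le S fun i hi => le_trans (by norm_num) (h5 i hi)
  have step3 : (2 : ℝ) ^ (2 * E / 15) ≤ (q : ℝ) ^ (2 * E / 15) :=
    Real.rpow_le_rpow (by norm_num) hq2 (by positivity)
  have hsplit : (q : ℝ) ^ (E / 3) = (q : ℝ) ^ (2 * E / 15) * (q : ℝ) ^ (E / 5) := by
    rw [← Real.rpow_add hq0]; ring_nf
  have hpow5 : (0 : ℝ) < (q : ℝ) ^ (E / 5) := Real.rpow_pos_of_pos hq0 _
  calc ∑ b ∈ S, (b : ℝ) * (q : ℝ) ^ (E / (b : ℝ))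
      ≤ ((∏ b ∈ S, b : ℕ) : ℝ) * (q : ℝ) ^ (E / 5) := by
        exact le_trans step1 (mul_le_mul_of_nonneg_right step2 hpow5.le)
    _ < (c * (2 : ℝ) ^ (2 * E / 15)) * (q : ℝ) ^ (E / 5) := by
        exact mul_lt_mul_of_pos_right hkey hpow5
    _ ≤ (c * (q : ℝ) ^ (2 * E / 15)) * (q : ℝ) ^ (E / 5) := by
        have hc0 : 0 ≤ c := by
          by_contra h
          push_neg at h
          have : ((∏ b ∈ S, b : ℕ) : ℝ) ≥ 0 := Nat.cast_nonneg _
          nlinarith [Real.rpow_pos_of_pos (two_pos : (0:ℝ) < 2) (2 * E / 15)]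
        exact mul_le_mul_of_nonneg_right (mul_le_mul_of_nonneg_left step3 hc0) hpow5.le
    _ = c * (q : ℝ) ^ (E / 3) := by rw [hsplit]; ring

/-- Lemma: for `q ≥ 2`, `2 ≤ e2 ≤ e1 ≤ d - 2` with `d = e1 + e2`, summing over the set `B`
of odd prime divisors of `gcd(e1, e2)`, one has `∑_{b ∈ B} b q^{e1 e2 / b} < 3.01 q^{e1 e2 / 3}`. -/
theorem sum_odd_prime_divisors_rpow_lt
    (q e1 e2 d : ℕ) (hq : 2 ≤ q) (he2 : 2 ≤ e2) (he12 : e2 ≤ e1)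
    (he1d : e1 ≤ d - 2) (hd : d = e1 + e2) :
    ∑ b ∈ (Nat.gcd e1 e2).divisors.filter (fun b => b.Prime ∧ b ≠ 2),
        (b : ℝ) * (q : ℝ) ^ (((e1 : ℝ) * (e2 : ℝ)) / (b : ℝ)) <
      3.01 * (q : ℝ) ^ (((e1 : ℝ) * (e2 : ℝ)) / 3) := by
  set g := Nat.gcd e1 e2 with hgdef
  have hg0 : 0 < g := Nat.gcd_pos_of_pos_right _ (by omega)
  have hge1 : g ≤ e1 := Nat.le_of_dvd (by omega) (Nat.gcd_dvd_left _ _)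
  have hge2 : g ≤ e2 := Nat.le_of_dvd (by omega) (Nat.gcd_dvd_right _ _)
  set E : ℝ := (e1 : ℝ) * (e2 : ℝ) with hEdef
  have hE0 : (0 : ℝ) ≤ E := by positivity
  set B := g.divisors.filter (fun b => b.Prime ∧ b ≠ 2) with hBdef
  have hBsub : B ⊆ g.primeFactors := by
    intro b hb
    rw [hBdef, Finset.mem_filter, Nat.mem_divisors] at hb
    rw [Nat.mem_primeFactors]
    exact ⟨hb.2.1, hb.1.1, hb.1.2⟩
  have hPdvd : (∏ b ∈ B, b) ∣ g :=
    (Finset.prod_dvd_prod_of_subset _ _ _ hBsub).trans (Nat.prod_primeFactors_dvd g)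
  have hPle : (∏ b ∈ B, b) ≤ g := Nat.le_of_dvd hg0 hPdvd
  set S := B.erase 3 with hSdef
  have hS5 : ∀ b ∈ S, 5 ≤ b := by
    intro b hb
    have hb3 : b ≠ 3 := Finset.ne_of_mem_erase hb
    have hbB := Finset.mem_of_mem_erase hb
    rw [hBdef, Finset.mem_filter] at hbB
    have hbp : b.Prime := hbB.2.1
    have hb2 : b ≠ 2 := hbB.2.2
    have h2b := hbp.two_le
    by_contra h
    push_neg at h
    interval_cases b <;> simp_all <;> norm_num at hbp
  have hposq : (0 : ℝ) < (q : ℝ) ^ (E / 3) :=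
    Real.rpow_pos_of_pos (by exact_mod_cast lt_of_lt_of_le two_pos hq : (0:ℝ) < q) _
  by_cases h3 : 3 ∈ B
  · -- case 3 ∈ B
    have hins : B = insert 3 S := (Finset.insert_erase h3).symm
    rw [hins, Finset.sum_insert (Finset.notMem_erase _ _)]
    have hrem : ∑ b ∈ S, (b : ℝ) * (q : ℝ) ^ (E / (b : ℝ)) < 0.01 * (q : ℝ) ^ (E / 3) := by
      rcases S.eq_empty_or_nonempty with hSe | ⟨x, hx⟩
      · rw [hSe, Finset.sum_empty]; positivity
      · apply aux_sum_lt q hq E hE0 S hS5 0.01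
        set P' := ∏ b ∈ S, b with hP'def
        have hP'x : x ≤ P' :=
          Finset.single_le_prod' (fun i hi => le_trans (by norm_num) (hS5 i hi)) hx
        have hP'5 : 5 ≤ P' := le_trans (hS5 x hx) hP'x
        have hprod : (∏ b ∈ B, b) = 3 * P' := by
          rw [hins, Finset.prod_insert (Finset.notMem_erase _ _)]
        have h9 : 9 * P' ^ 2 ≤ e1 * e2 := by
          have h1 : 3 * P' ≤ e1 := le_trans (hprod ▸ hPle) hge1
          have h2 : 3 * P' ≤ e2 := le_trans (hprod ▸ hPle) hge2
          nlinarith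
        have h9R : 9 * (P' : ℝ) ^ 2 ≤ E := by
          rw [hEdef]; exact_mod_cast h9
        calc ((P' : ℕ) : ℝ) < 0.01 * (2 : ℝ) ^ ((6 * (P' : ℝ) ^ 2) / 5) := keyB P' hP'5
          _ ≤ 0.01 * (2 : ℝ) ^ (2 * E / 15) := by
              have := Real.rpow_le_rpow_of_exponent_le (one_le_two (α := ℝ))
                (show (6 * (P' : ℝ) ^ 2) / 5 ≤ 2 * E / 15 by linarith)
              nlinarith
    push_cast
    nlinarith
  · -- case 3 ∉ B
    have hSB : S = B := Finset.erase_eq_of_notMem h3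
    rw [hSB] at hS5
    rcases B.eq_empty_or_nonempty with hBe | ⟨x, hx⟩
    · rw [hBe, Finset.sum_empty]; positivity
    · apply aux_sum_lt q hq E hE0 B hS5 3.01
      set P := ∏ b ∈ B, b with hPdef
      have hPx : x ≤ P :=
        Finset.single_le_prod' (fun i hi => le_trans (by norm_num) (hS5 i hi)) hx
      have hP5 : 5 ≤ P := le_trans (hS5 x hx) hPx
      have h1 : P ^ 2 ≤ e1 * e2 := by
        have h1 : P ≤ e1 := le_trans hPle hge1
        have h2 : P ≤ e2 := le_trans hPle hge2
        nlinarith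
      have h1R : (P : ℝ) ^ 2 ≤ E := by rw [hEdef]; exact_mod_cast h1
      calc ((P : ℕ) : ℝ) < 3.01 * (2 : ℝ) ^ ((2 * (P : ℝ) ^ 2) / 15) := keyA P hP5
        _ ≤ 3.01 * (2 : ℝ) ^ (2 * E / 15) := by
            have := Real.rpow_le_rpow_of_exponent_le (one_le_two (α := ℝ))
              (show (2 * (P : ℝ) ^ 2) / 15 ≤ 2 * E / 15 by linarith)
            nlinarith
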